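/- Let a > 0 and x_a ≥ e¹² be real numbers, and suppose that θ(t) < t + a·t/(log t)⁵ for all real t ≥ 2. Define M_a = 120 + a + (a+720)/log x_a + (1792a + 1290240)/(log x_a)² + ((5040 + 7a)/(log 2)⁸)·(log x_a)⁶/√(x_a). Then for every real x > x_a, one has π(x) < x·∑_{k=0}^{4} k!/(log x)^{k+1} + M_a·x/(log x)⁶. -/

import Mathlib

open Real Finset

/-- The prime counting function at a real argument: the number of primes `p ≤ x`. -/
noncomputable def primePi (x : ℝ) : ℝ := Nat.primeCounting ⌊x⌋₊

/-- Chebyshev's theta function: `θ(x) = ∑_{p ≤ x} log p`, the sum over primes `p ≤ x`. -/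
noncomputable def chebyshevθ (x : ℝ) : ℝ :=
  ∑ p ∈ (Finset.range (⌊x⌋₊ + 1)).filter Nat.Prime, Real.log p

section aux
open MeasureTheory

lemma intLog (n : ℕ) {b c : ℝ} (hb : 2 ≤ b) (hc : 2 ≤ c) :
    IntervalIntegrable (fun t => 1/(Real.log t)^n) volume b c := by
  apply ContinuousOn.intervalIntegrable
  have hs : Set.uIcc b c ⊆ {x : ℝ | x ≠ 0 ∧ Real.log x ≠ 0} := by
    intro t ht
    have h2 : 2 ≤ t := le_trans (le_min hb hc)
      (Set.mem_uIcc.mp ht |>.elim (fun h => le_trans (min_le_left _ _) h.1)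
        (fun h => le_trans (min_le_right _ _) h.1))
    exact ⟨by linarith, (Real.log_pos (by linarith)).ne'⟩
  apply ContinuousOn.div continuousOn_const
  · exact (Real.continuousOn_log.mono (fun t ht => (hs ht).1)).pow n
  · exact fun t ht => pow_ne_zero n (hs ht).2

lemma ftcLog (n : ℕ) {b c : ℝ} (hb : 2 ≤ b) (hbc : b ≤ c) :
    ∫ t in b..c, (1/(Real.log t)^(n+1) - (n+1) * (1/(Real.log t)^(n+2))) =
      c/(Real.log c)^(n+1) - b/(Real.log b)^(n+1) := by
  have hc : 2 ≤ c := le_trans hb hbc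
  apply intervalIntegral.integral_eq_sub_of_hasDerivAt (f := fun t => t/(Real.log t)^(n+1))
  · intro t ht
    rw [Set.uIcc_of_le hbc] at ht
    have h2 : 2 ≤ t := le_trans hb ht.1
    have ht0 : t ≠ 0 := by linarith
    have hl : Real.log t ≠ 0 := (Real.log_pos (by linarith)).ne'
    have H := (hasDerivAt_id t).div ((Real.hasDerivAt_log ht0).pow (n+1)) (pow_ne_zero _ hl)
    refine H.congr_deriv ?_
    have : (↑(n+1) : ℝ) * Real.log t ^ (n + 1 - 1) * t⁻¹ = (n+1) * Real.log t ^ n * t⁻¹ := by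
      norm_num
    rw [this]
    simp only [Pi.pow_apply, id_eq]
    field_simp
    ring
  · exact ((intLog (n+1) hb hc).sub ((intLog (n+2) hb hc).const_mul _))

lemma theta_eq (c : ℕ → ℝ) (hc : c = fun k => if Nat.Prime k then Real.log k else 0) (t : ℝ) :
    ∑ k ∈ Finset.Icc 0 ⌊t⌋₊, c k = chebyshevθ t := by
  rw [chebyshevθ, Finset.sum_filter, ← Finset.Ico_add_one_right_eq_Icc, ← Finset.range_eq_Ico, hc]

lemma theta_nonneg (t : ℝ) : 0 ≤ chebyshevθ t := by
  apply Finset.sum_nonneg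
  intro p hp
  simp only [Finset.mem_filter] at hp
  exact Real.log_nonneg (by exact_mod_cast hp.2.one_lt.le)

lemma abel_pi (x : ℝ) (hx : 2 ≤ x) :
    (primePi x : ℝ) = chebyshevθ x / Real.log x +
      ∫ t in Set.Ioc 2 x, chebyshevθ t / (t * Real.log t ^ 2) := by
  set c : ℕ → ℝ := fun k => if Nat.Prime k then Real.log k else 0 with hc
  set f : ℝ → ℝ := fun t => (Real.log t)⁻¹ with hf
  have hf_diff : ∀ t ∈ Set.Icc (3/2 : ℝ) x, DifferentiableAt ℝ f t := by
    intro t ht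
    have h1 : (1:ℝ) < t := lt_of_lt_of_le (by norm_num) ht.1
    exact (Real.differentiableAt_log (by linarith)).inv (Real.log_pos h1).ne'
  have hderiv : ∀ t : ℝ, 1 < t → deriv f t = -(t⁻¹) / (Real.log t)^2 := by
    intro t h1
    exact ((Real.hasDerivAt_log (by linarith)).inv (Real.log_pos h1).ne').deriv
  have hne : ∀ t : ℝ, t ∈ Set.Icc (3/2 : ℝ) x → t ∈ ({0}ᶜ : Set ℝ) := by
    intro t ht
    simp only [Set.mem_compl_iff, Set.mem_singleton_iff]
    have h1 : (3/2:ℝ) ≤ t := ht.1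
    intro h; rw [h] at h1; norm_num at h1
  have hf_int : IntegrableOn (deriv f) (Set.Icc (3/2 : ℝ) x) := by
    have hcont : ContinuousOn (fun t : ℝ => -(t⁻¹) / (Real.log t)^2) (Set.Icc (3/2 : ℝ) x) := by
      apply ContinuousOn.div
      · exact (continuousOn_inv₀.mono hne).neg
      · exact (Real.continuousOn_log.mono hne).pow 2
      · intro t ht
        have h1 : (1:ℝ) < t := lt_of_lt_of_le (by norm_num) ht.1
        exact pow_ne_zero 2 (Real.log_pos h1).ne'
    exact (hcont.integrableOn_Icc).congr_fun
      (fun t ht => (hderiv t (lt_of_lt_of_le (by norm_num) ht.1)).symm) measurableSet_Icc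
  have h32 : (0:ℝ) ≤ 3/2 := by norm_num
  have h32x : (3/2 : ℝ) ≤ x := by linarith
  have habel := sum_mul_eq_sub_sub_integral_mul c (a := 3/2) (b := x) h32 h32x hf_diff hf_int
  have hfloor32 : ⌊(3/2 : ℝ)⌋₊ = 1 := by rw [Nat.floor_eq_iff (by norm_num)]; norm_num
  rw [hfloor32] at habel
  have hLHS : ∑ k ∈ Finset.Ioc 1 ⌊x⌋₊, f k * c k = primePi x := by
    have hterm : ∀ k ∈ Finset.Ioc 1 ⌊x⌋₊, f k * c k = if Nat.Prime k then 1 else 0 := by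
      intro k hk
      simp only [hc, hf, mul_ite, mul_zero]
      split_ifs with hp
      · have h1 : (1:ℝ) < k := by exact_mod_cast hp.one_lt
        exact inv_mul_cancel₀ (Real.log_pos h1).ne'
      · rfl
    rw [Finset.sum_congr rfl hterm, Finset.sum_boole]
    rw [primePi, Nat.primeCounting, Nat.primeCounting', Nat.count_eq_card_filter_range]
    norm_cast
    congr 1
    ext k
    simp only [Finset.mem_filter, Finset.mem_Ioc, Finset.mem_range]
    constructor
    · rintro ⟨⟨h1, h2⟩, hp⟩; exact ⟨by omega, hp⟩
    · rintro ⟨h1, hp⟩; exact ⟨⟨hp.one_lt, by omega⟩, hp⟩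
  have hS32 : ∑ k ∈ Finset.Icc 0 1, c k = 0 := by
    have h01 : Finset.Icc 0 1 = ({0, 1} : Finset ℕ) := by decide
    rw [h01]
    simp [hc, Nat.not_prime_zero, Nat.not_prime_one]
  have hInt : ∫ t in Set.Ioc (3/2 : ℝ) x, deriv f t * (∑ k ∈ Finset.Icc 0 ⌊t⌋₊, c k) =
      -∫ t in Set.Ioc 2 x, chebyshevθ t / (t * Real.log t ^ 2) := by
    have hEq : Set.EqOn (fun t => deriv f t * (∑ k ∈ Finset.Icc 0 ⌊t⌋₊, c k))
        (fun t => -((Set.Icc 2 x).indicator (fun t => chebyshevθ t / (t * Real.log t ^ 2)) t))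
        (Set.Ioc (3/2 : ℝ) x) := by
      intro t ht
      simp only
      rcases lt_or_ge t 2 with h2 | h2
      · have hfl : ⌊t⌋₊ = 1 := by
          rw [Nat.floor_eq_iff (by linarith [ht.1] : (0:ℝ) ≤ t)]
          constructor
          · push_cast; linarith [ht.1]
          · push_cast; linarith
        have hnm : t ∉ Set.Icc (2:ℝ) x := by
          simp only [Set.mem_Icc, not_and]; intro h; linarith
        rw [hfl, hS32, mul_zero, Set.indicator_of_notMem hnm, neg_zero]
      · have h1 : (1:ℝ) < t := by linarith
        have hmem : t ∈ Set.Icc (2:ℝ) x := Set.mem_Icc.mpr ⟨h2, ht.2⟩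
        rw [theta_eq c hc t, hderiv t h1, Set.indicator_of_mem hmem]
        have ht0 : t ≠ 0 := by linarith
        have hl : Real.log t ≠ 0 := (Real.log_pos h1).ne'
        field_simp
    have hsub : Set.Icc (2:ℝ) x ⊆ Set.Ioc (3/2:ℝ) x := by
      intro t ht
      exact ⟨by linarith [ht.1], ht.2⟩
    rw [setIntegral_congr_fun measurableSet_Ioc hEq, integral_neg,
      setIntegral_indicator measurableSet_Icc,
      Set.inter_eq_self_of_subset_right hsub, integral_Icc_eq_integral_Ioc]
  rw [hLHS, theta_eq c hc x, hS32, mul_zero, sub_zero, hInt, sub_neg_eq_add] at habel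
  rw [habel, hf]
  rw [div_eq_inv_mul]

lemma keyA {x xa : ℝ} (hxa : Real.exp 12 ≤ xa) (hx : xa < x) :
    (Real.log x)^6 * Real.sqrt xa ≤ (Real.log xa)^6 * Real.sqrt x := by
  have hxa0 : 0 < xa := lt_of_lt_of_le (Real.exp_pos 12) hxa
  have hx0 : 0 < x := hxa0.trans hx
  have hLa : 12 ≤ Real.log xa := (Real.le_log_iff_exp_le hxa0).mpr hxa
  have hLL : Real.log xa ≤ Real.log x := Real.log_le_log hxa0 hx.le
  set La := Real.log xa with hLadef
  set L := Real.log x with hLdef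
  have hLa0 : (0:ℝ) < La := by linarith
  have hs0 : 0 ≤ L - La := by linarith
  have hsqx : Real.sqrt x = Real.exp (L * (1/2)) := by
    rw [Real.sqrt_eq_rpow, Real.rpow_def_of_pos hx0]
  have hsqxa : Real.sqrt xa = Real.exp (La * (1/2)) := by
    rw [Real.sqrt_eq_rpow, Real.rpow_def_of_pos hxa0]
  have h1 : 1 + (L-La)/La ≤ Real.exp ((L-La)/La) := by
    linarith [Real.add_one_le_exp ((L-La)/La)]
  have h2 : (1 + (L-La)/La)^6 ≤ Real.exp ((L-La)/La)^6 := by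
    apply pow_le_pow_left₀ (by positivity) h1
  have h3 : Real.exp ((L-La)/La)^6 = Real.exp (6*((L-La)/La)) := by
    rw [← Real.exp_nat_mul]; norm_num
  have h4 : 6*((L-La)/La) ≤ (L-La)*(1/2) := by
    have hd : (L-La)/La ≤ (L-La)/12 := by gcongr
    linarith
  have h5 : (1 + (L-La)/La)^6 ≤ Real.exp ((L-La)*(1/2)) := by
    refine h2.trans ?_
    rw [h3]
    exact Real.exp_le_exp.mpr h4
  have h6 : La * (1 + (L-La)/La) = L := by field_simp; ring
  calc L^6 * Real.sqrt xa = (La*(1+(L-La)/La))^6 * Real.exp (La*(1/2)) := by rw [h6, hsqxa]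
    _ = La^6 * (1+(L-La)/La)^6 * Real.exp (La*(1/2)) := by rw [mul_pow]
    _ ≤ La^6 * Real.exp ((L-La)*(1/2)) * Real.exp (La*(1/2)) := by gcongr
    _ = La^6 * Real.exp (L*(1/2)) := by
        rw [mul_assoc, ← Real.exp_add]
        have he : (L-La)*(1/2) + La*(1/2) = L*(1/2) := by ring
        rw [he]
    _ = La^6 * Real.sqrt x := by rw [hsqx]

end aux

set_option maxHeartbeats 2000000 in
theorem pi_upper_bound_from_theta (a xa : ℝ) (ha : a > 0) (hxa : xa ≥ Real.exp 1 ^ 12)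
    (hθ : ∀ t : ℝ, t ≥ 2 → chebyshevθ t < t + a * t / Real.log t ^ 5) :
    ∀ x : ℝ, x > xa →
      primePi x < x * (∑ k ∈ Finset.range 5, (k.factorial : ℝ) / Real.log x ^ (k + 1)) +
        (120 + a + (a + 720) / Real.log xa + (1792 * a + 1290240) / Real.log xa ^ 2 +
            ((5040 + 7 * a) / Real.log 2 ^ 8) * Real.log xa ^ 6 / Real.sqrt xa) *
          x / Real.log x ^ 6 := by
  intro x hx
  have he12 : Real.exp 1 ^ 12 = Real.exp 12 := by rw [← Real.exp_nat_mul]; norm_num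
  have hxa12 : Real.exp 12 ≤ xa := by rw [← he12]; exact hxa
  have hexp12 : (13:ℝ) ≤ Real.exp 12 := by linarith [Real.add_one_le_exp (12:ℝ)]
  have hxa0 : (0:ℝ) < xa := by linarith
  have hx2 : (2:ℝ) ≤ x := by linarith
  have hx0 : (0:ℝ) < x := by linarith
  have hLa : 12 ≤ Real.log xa := (Real.le_log_iff_exp_le hxa0).mpr hxa12
  have hLL : Real.log xa < Real.log x := Real.log_lt_log hxa0 hx
  have hL0 : (0:ℝ) < Real.log x := by linarith
  have hLne : Real.log x ≠ 0 := hL0.ne'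
  have hl2 : (0:ℝ) < Real.log 2 := Real.log_pos (by norm_num)
  have hsq0 : (0:ℝ) ≤ Real.sqrt x := Real.sqrt_nonneg x
  have hsq2 : (2:ℝ) ≤ Real.sqrt x := by
    have h4 : Real.sqrt 4 ≤ Real.sqrt x := Real.sqrt_le_sqrt (by linarith)
    have : Real.sqrt 4 = 2 := by
      rw [show (4:ℝ) = 2^2 by norm_num, Real.sqrt_sq (by norm_num)]
    linarith
  have hsqx : Real.sqrt x ≤ x := by
    have h := Real.sqrt_le_sqrt (show x ≤ x^2 by nlinarith)
    rwa [Real.sqrt_sq hx0.le] at h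
  have hsqpos : (0:ℝ) < Real.sqrt x := by linarith
  have hlsq : Real.log (Real.sqrt x) = Real.log x / 2 := Real.log_sqrt hx0.le
  have hsqa0 : (0:ℝ) < Real.sqrt xa := Real.sqrt_pos.mpr hxa0
  -- Abel summation
  have habel := abel_pi x hx2
  -- Step 1: bound θ(x)/log x
  have hθx := hθ x hx2
  have hstep1 : chebyshevθ x / Real.log x < x/Real.log x + a*(x/Real.log x^6) := by
    have h2 : chebyshevθ x / Real.log x < (x + a*x/Real.log x^5)/Real.log x := by
      gcongr
    have h3 : (x + a*x/Real.log x^5)/Real.log x = x/Real.log x + a*(x/Real.log x^6) := by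
      field_simp
    linarith
  -- Step 2: bound the integral by ∫ (1/log² + a/log⁷)
  have hstep2 : (∫ t in Set.Ioc 2 x, chebyshevθ t / (t * Real.log t ^ 2)) ≤
      (∫ t in (2:ℝ)..x, 1/(Real.log t)^2) + a * ∫ t in (2:ℝ)..x, 1/(Real.log t)^7 := by
    have hg_int : MeasureTheory.IntegrableOn
        (fun t => 1/(Real.log t)^2 + a*(1/(Real.log t)^7)) (Set.Ioc 2 x) := by
      rw [← intervalIntegrable_iff_integrableOn_Ioc_of_le hx2]
      exact (intLog 2 le_rfl hx2).add ((intLog 7 le_rfl hx2).const_mul a)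
    have hmono : (∫ t in Set.Ioc 2 x, chebyshevθ t / (t * Real.log t ^ 2)) ≤
        ∫ t in Set.Ioc 2 x, (1/(Real.log t)^2 + a*(1/(Real.log t)^7)) := by
      apply MeasureTheory.integral_mono_of_nonneg
      · filter_upwards [MeasureTheory.ae_restrict_mem measurableSet_Ioc] with t ht
        have h1 : (0:ℝ) < t := by linarith [ht.1]
        have h2 : (0:ℝ) ≤ chebyshevθ t := theta_nonneg t
        positivity
      · exact hg_int
      · filter_upwards [MeasureTheory.ae_restrict_mem measurableSet_Ioc] with t ht
        have h2 : (2:ℝ) < t := ht.1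
        have h1 : (1:ℝ) < t := by linarith
        have hl : (0:ℝ) < Real.log t := Real.log_pos h1
        have ht0 : (0:ℝ) < t := by linarith
        have hb := hθ t (by linarith)
        have heq : (t + a*t/Real.log t^5)/(t*Real.log t^2)
            = 1/(Real.log t)^2 + a*(1/(Real.log t)^7) := by
          field_simp
        calc chebyshevθ t / (t * Real.log t ^ 2)
            ≤ (t + a*t/Real.log t^5)/(t*Real.log t^2) := by
              gcongr
          _ = _ := heq
    have hconv : (∫ t in Set.Ioc 2 x, (1/(Real.log t)^2 + a*(1/(Real.log t)^7)))
        = (∫ t in (2:ℝ)..x, 1/(Real.log t)^2) + a * ∫ t in (2:ℝ)..x, 1/(Real.log t)^7 := by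
      rw [← intervalIntegral.integral_of_le hx2,
        intervalIntegral.integral_add (intLog 2 le_rfl hx2) ((intLog 7 le_rfl hx2).const_mul a),
        intervalIntegral.integral_const_mul]
    linarith
  -- recursion for the integrals
  have Erec : ∀ (n : ℕ) (r : ℝ), (n:ℝ)+1 = r → (∫ t in (2:ℝ)..x, 1/(Real.log t)^(n+1)) =
      x/(Real.log x)^(n+1) - 2/(Real.log 2)^(n+1)
        + r * ∫ t in (2:ℝ)..x, 1/(Real.log t)^(n+2) := by
    intro n r hr
    subst hr
    have h := ftcLog n le_rfl hx2
    have hsub := intervalIntegral.integral_sub (intLog (n+1) le_rfl hx2)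
      ((intLog (n+2) le_rfl hx2).const_mul ((n:ℝ)+1))
    rw [intervalIntegral.integral_const_mul] at hsub
    push_cast at h
    linarith [h, hsub]
  have E2 : (∫ t in (2:ℝ)..x, 1/(Real.log t)^2) = x/(Real.log x)^2 - 2/(Real.log 2)^2
      + 2 * ∫ t in (2:ℝ)..x, 1/(Real.log t)^3 := Erec 1 2 (by norm_num)
  have E3 : (∫ t in (2:ℝ)..x, 1/(Real.log t)^3) = x/(Real.log x)^3 - 2/(Real.log 2)^3
      + 3 * ∫ t in (2:ℝ)..x, 1/(Real.log t)^4 := Erec 2 3 (by norm_num)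
  have E4 : (∫ t in (2:ℝ)..x, 1/(Real.log t)^4) = x/(Real.log x)^4 - 2/(Real.log 2)^4
      + 4 * ∫ t in (2:ℝ)..x, 1/(Real.log t)^5 := Erec 3 4 (by norm_num)
  have E5 : (∫ t in (2:ℝ)..x, 1/(Real.log t)^5) = x/(Real.log x)^5 - 2/(Real.log 2)^5
      + 5 * ∫ t in (2:ℝ)..x, 1/(Real.log t)^6 := Erec 4 5 (by norm_num)
  have E6 : (∫ t in (2:ℝ)..x, 1/(Real.log t)^6) = x/(Real.log x)^6 - 2/(Real.log 2)^6
      + 6 * ∫ t in (2:ℝ)..x, 1/(Real.log t)^7 := Erec 5 6 (by norm_num)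
  have E7 : (∫ t in (2:ℝ)..x, 1/(Real.log t)^7) = x/(Real.log x)^7 - 2/(Real.log 2)^7
      + 7 * ∫ t in (2:ℝ)..x, 1/(Real.log t)^8 := Erec 6 7 (by norm_num)
  -- bound on I8
  have hI8b1 : (∫ t in (2:ℝ)..Real.sqrt x, 1/(Real.log t)^8)
      ≤ Real.sqrt x * (1/(Real.log 2)^8) := by
    have h := intervalIntegral.integral_mono_on hsq2 (intLog 8 le_rfl hsq2)
      intervalIntegrable_const (g := fun _ => 1/(Real.log 2)^8) (fun t ht => by
        have h2 : (2:ℝ) ≤ t := ht.1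
        have hlt : Real.log 2 ≤ Real.log t := Real.log_le_log (by norm_num) h2
        exact one_div_le_one_div_of_le (by positivity) (pow_le_pow_left₀ hl2.le hlt 8))
    rw [intervalIntegral.integral_const, smul_eq_mul] at h
    have h2 : (Real.sqrt x - 2) * (1/(Real.log 2)^8) ≤ Real.sqrt x * (1/(Real.log 2)^8) :=
      mul_le_mul_of_nonneg_right (by linarith) (by positivity)
    linarith
  have hI8b2 : (∫ t in Real.sqrt x..x, 1/(Real.log t)^8) ≤ 256*(x/(Real.log x)^8) := by
    have hhalf : (0:ℝ) < Real.log x / 2 := by linarith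
    have h := intervalIntegral.integral_mono_on hsqx (intLog 8 hsq2 hx2)
      intervalIntegrable_const (g := fun _ => 256/(Real.log x)^8) (fun t ht => by
        have hst : Real.sqrt x ≤ t := ht.1
        have hlt : Real.log x / 2 ≤ Real.log t := by
          rw [← hlsq]; exact Real.log_le_log hsqpos hst
        have h1 : 1/(Real.log t)^8 ≤ 1/(Real.log x/2)^8 :=
          one_div_le_one_div_of_le (by positivity) (pow_le_pow_left₀ hhalf.le hlt 8)
        have h2 : (Real.log x/2)^8 = Real.log x^8/256 := by ring
        rw [h2, one_div_div] at h1
        exact h1)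
    rw [intervalIntegral.integral_const, smul_eq_mul] at h
    have e : 256*(x/(Real.log x)^8) - (x - Real.sqrt x) * (256/(Real.log x)^8)
        = 256*(Real.sqrt x/(Real.log x)^8) := by ring
    have hp : (0:ℝ) ≤ 256*(Real.sqrt x/(Real.log x)^8) := by positivity
    linarith
  have hI8 : (∫ t in (2:ℝ)..x, 1/(Real.log t)^8)
      ≤ Real.sqrt x * (1/(Real.log 2)^8) + 256*(x/(Real.log x)^8) := by
    rw [← intervalIntegral.integral_add_adjacent_intervals (intLog 8 le_rfl hsq2)
      (intLog 8 hsq2 hx2)]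
    exact add_le_add hI8b1 hI8b2
  -- positivity of boundary constants
  have hc2 : (0:ℝ) ≤ 2/(Real.log 2)^2 := by positivity
  have hc3 : (0:ℝ) ≤ 2/(Real.log 2)^3 := by positivity
  have hc4 : (0:ℝ) ≤ 2/(Real.log 2)^4 := by positivity
  have hc5 : (0:ℝ) ≤ 2/(Real.log 2)^5 := by positivity
  have hc6 : (0:ℝ) ≤ 2/(Real.log 2)^6 := by positivity
  have hc7 : (0:ℝ) ≤ 2/(Real.log 2)^7 := by positivity
  -- combined bounds
  have hI7le : (∫ t in (2:ℝ)..x, 1/(Real.log t)^7) ≤ x/Real.log x^7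
      + 7*(Real.sqrt x * (1/(Real.log 2)^8) + 256*(x/(Real.log x)^8)) := by
    linarith
  have haI7 : a * (∫ t in (2:ℝ)..x, 1/(Real.log t)^7) ≤ a * (x/Real.log x^7
      + 7*(Real.sqrt x * (1/(Real.log 2)^8) + 256*(x/(Real.log x)^8))) :=
    mul_le_mul_of_nonneg_left hI7le ha.le
  have hI2le : (∫ t in (2:ℝ)..x, 1/(Real.log t)^2) ≤ x/Real.log x^2 + 2*(x/Real.log x^3)
      + 6*(x/Real.log x^4) + 24*(x/Real.log x^5) + 120*(x/Real.log x^6)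
      + 720*(x/Real.log x^7
        + 7*(Real.sqrt x * (1/(Real.log 2)^8) + 256*(x/(Real.log x)^8))) := by
    linarith
  -- the three tail comparisons
  have hLa0 : (0:ℝ) < Real.log xa := by linarith
  have A1 : (720+a)*(x/Real.log x^7) ≤ ((a+720)/Real.log xa)*(x/Real.log x^6) := by
    have key : (a+720)/Real.log x ≤ (a+720)/Real.log xa :=
      div_le_div_of_nonneg_left (by linarith) hLa0 hLL.le
    have e1 : (720+a)*(x/Real.log x^7) = ((a+720)/Real.log x) * (x/Real.log x^6) := by
      field_simp
      ring
    rw [e1]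
    exact mul_le_mul_of_nonneg_right key (by positivity)
  have A2 : (1792*a+1290240)*(x/Real.log x^8)
      ≤ ((1792*a+1290240)/Real.log xa^2)*(x/Real.log x^6) := by
    have key : (1792*a+1290240)/Real.log x^2 ≤ (1792*a+1290240)/Real.log xa^2 :=
      div_le_div_of_nonneg_left (by linarith) (by positivity) (by gcongr)
    have e1 : (1792*a+1290240)*(x/Real.log x^8)
        = ((1792*a+1290240)/Real.log x^2) * (x/Real.log x^6) := by
      field_simp
    rw [e1]
    exact mul_le_mul_of_nonneg_right key (by positivity)
  have A3 : (5040+7*a)*(Real.sqrt x*(1/Real.log 2^8))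
      ≤ (5040+7*a)/Real.log 2^8 * Real.log xa^6 / Real.sqrt xa * x / Real.log x^6 := by
    have hkeyA := keyA hxa12 hx
    have hxsq : Real.sqrt x * Real.sqrt x = x := Real.mul_self_sqrt hx0.le
    have h1 : Real.sqrt x * (Real.sqrt xa * Real.log x^6) ≤ Real.log xa^6 * x := by
      calc Real.sqrt x * (Real.sqrt xa * Real.log x^6)
          = (Real.log x^6*Real.sqrt xa)*Real.sqrt x := by ring
        _ ≤ (Real.log xa^6*Real.sqrt x)*Real.sqrt x :=
            mul_le_mul_of_nonneg_right hkeyA hsq0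
        _ = Real.log xa^6 * x := by rw [mul_assoc, hxsq]
    have h2 : Real.sqrt x ≤ Real.log xa^6 * x/(Real.sqrt xa * Real.log x^6) := by
      rw [le_div_iff₀ (by positivity)]
      linarith
    calc (5040+7*a)*(Real.sqrt x*(1/Real.log 2^8))
        = ((5040+7*a)/Real.log 2^8)*Real.sqrt x := by ring
      _ ≤ ((5040+7*a)/Real.log 2^8)*(Real.log xa^6 * x/(Real.sqrt xa * Real.log x^6)) :=
          mul_le_mul_of_nonneg_left h2 (by positivity)
      _ = (5040+7*a)/Real.log 2^8 * Real.log xa^6 / Real.sqrt xa * x / Real.log x^6 := by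
          field_simp
  -- expansions of goal terms
  have hS : x * (∑ k ∈ Finset.range 5, (k.factorial : ℝ) / Real.log x ^ (k + 1))
      = x/Real.log x + x/Real.log x^2 + 2*(x/Real.log x^3) + 6*(x/Real.log x^4)
        + 24*(x/Real.log x^5) := by
    simp [Finset.sum_range_succ, Nat.factorial]
    ring
  have hMexp : (120 + a + (a + 720) / Real.log xa + (1792 * a + 1290240) / Real.log xa ^ 2 +
      ((5040 + 7 * a) / Real.log 2 ^ 8) * Real.log xa ^ 6 / Real.sqrt xa) * x / Real.log x ^ 6
      = 120*(x/Real.log x^6) + a*(x/Real.log x^6)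
        + ((a+720)/Real.log xa)*(x/Real.log x^6)
        + ((1792*a+1290240)/Real.log xa^2)*(x/Real.log x^6)
        + (5040+7*a)/Real.log 2^8 * Real.log xa^6/Real.sqrt xa * x/Real.log x^6 := by
    ring
  linarith [habel, hstep1, hstep2, hI2le, haI7, A1, A2, A3, hS, hMexp]
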